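/- Let $(\Omega, \mathscr{F}, \mathbb{P})$ be a probability space, let $(\mathscr{F}_n)_{n \ge 0}$ be a filtration generating $\mathscr{F}$, and let $\widetilde{\mathbb{P}}$ be a probability measure on $(\Omega,\mathscr{F})$ with $\widetilde{\mathbb{P}}|_{\mathscr{F}_n} \ll \mathbb{P}|_{\mathscr{F}_n}$ for all $n$. Define $\alpha_n$ as the ratio of consecutive Radon–Nikodym derivatives: $\alpha_n = \frac{d(\widetilde{\mathbb{P}}|_{\mathscr{F}_n})/d(\mathbb{P}|_{\mathscr{F}_n})}{d(\widetilde{\mathbb{P}}|_{\mathscr{F}_{n-1}})/d(\mathbb{P}|_{\mathscr{F}_{n-1}})}$ on the set where the denominator is positive, and $0$ elsewhere. If $\sum_{n \ge 1}(1 - \mathbb{E}[\sqrt{\alpha_n} \mid \mathscr{F}_{n-1}]) = \infty$ $\mathbb{P}$-almost surely, then $\widetilde{\mathbb{P}} \perp \mathbb{P}$. -/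

import Mathlib

open MeasureTheory Filter Topology

/-- Hino 2005, Theorem 4.1: if the conditional Hellinger-type sums
`∑ (1 - E[√αₙ | 𝓕ₙ₋₁])` diverge `ℙ`-a.s., then `ℙ̃ ⟂ ℙ`. -/
theorem stmt_16 {Ω : Type*} {m0 : MeasurableSpace Ω}
    (ℱ : Filtration ℕ m0) (P Q : Measure Ω)
    [IsProbabilityMeasure P] [IsProbabilityMeasure Q]
    (hgen : (⨆ n, (ℱ n : MeasurableSpace Ω)) = m0)
    (habs : ∀ n, (Q.trim (ℱ.le n)).AbsolutelyContinuous (P.trim (ℱ.le n)))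
    (α : ℕ → Ω → ENNReal)
    (hα : ∀ n ω, α (n + 1) ω =
      if (Q.trim (ℱ.le n)).rnDeriv (P.trim (ℱ.le n)) ω = 0 then 0
      else (Q.trim (ℱ.le (n + 1))).rnDeriv (P.trim (ℱ.le (n + 1))) ω /
           (Q.trim (ℱ.le n)).rnDeriv (P.trim (ℱ.le n)) ω)
    (hdiv : ∀ᵐ ω ∂P, Tendsto
      (fun N => ∑ n ∈ Finset.range N,
        (1 - (P[(fun ω' => Real.sqrt ((α (n + 1) ω').toReal)) | ℱ n]) ω))
      atTop atTop) :
    Q.MutuallySingular P := by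
  classical
  set M : ℕ → Ω → ENNReal := fun n => (Q.trim (ℱ.le n)).rnDeriv (P.trim (ℱ.le n)) with hMdef
  have hMmeas : ∀ n, Measurable[ℱ n] (M n) := fun n => Measure.measurable_rnDeriv _ _
  have hMmeas0 : ∀ n, Measurable (M n) := fun n => (hMmeas n).mono (ℱ.le n) le_rfl
  have hMlt : ∀ n, ∀ᵐ ω ∂P, M n ω < ⊤ := fun n =>
    ae_of_ae_trim (ℱ.le n) (Measure.rnDeriv_lt_top _ _)
  -- the basic martingale identity: ∫_A M n dP = Q A for A ∈ ℱ n
  have hQeq : ∀ n {A : Set Ω}, MeasurableSet[ℱ n] A → ∫⁻ ω in A, M n ω ∂P = Q A := by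
    intro n A hA
    have h1 : ∫⁻ ω in A, M n ω ∂P = ∫⁻ ω in A, M n ω ∂(P.trim (ℱ.le n)) := by
      rw [← lintegral_indicator (ℱ.le n _ hA), ← lintegral_indicator hA,
        lintegral_trim (ℱ.le n) ((hMmeas n).indicator hA)]
    rw [h1, Measure.setLIntegral_rnDeriv' (habs n) hA, trim_measurableSet_eq (ℱ.le n) hA]
  have hMuniv : ∀ n, ∫⁻ ω, M n ω ∂P = 1 := by
    intro n
    have := hQeq n (MeasurableSet.univ (α := Ω))
    simpa using this
  have hMint : ∀ n, Integrable (fun ω => (M n ω).toReal) P := by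
    intro n
    refine integrable_toReal_of_lintegral_ne_top (hMmeas0 n).aemeasurable ?_
    rw [hMuniv n]; exact ENNReal.one_ne_top
  -- once zero, stays zero
  have hM0 : ∀ n, ∀ᵐ ω ∂P, M n ω = 0 → M (n + 1) ω = 0 := by
    intro n
    have hA : MeasurableSet[ℱ n] {ω | M n ω = 0} := hMmeas n (measurableSet_singleton 0)
    have hA' : MeasurableSet[ℱ (n + 1)] {ω | M n ω = 0} := ℱ.mono (Nat.le_succ n) _ hA
    have h0 : ∫⁻ ω in {ω | M n ω = 0}, M (n + 1) ω ∂P = 0 := by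
      rw [hQeq (n + 1) hA', ← hQeq n hA]
      calc ∫⁻ ω in {ω | M n ω = 0}, M n ω ∂P
          = ∫⁻ _ in {ω | M n ω = 0}, 0 ∂P :=
            setLIntegral_congr_fun_ae (ℱ.le n _ hA) (ae_of_all _ fun ω hω => hω)
        _ = 0 := lintegral_zero
    have h1 := (lintegral_eq_zero_iff ((hMmeas0 (n + 1)))).mp h0
    have h2 : ∀ᵐ ω ∂(P.restrict {ω | M n ω = 0}), M (n + 1) ω = 0 := by
      filter_upwards [h1] with ω hω using hω
    rw [ae_restrict_iff' (ℱ.le n _ hA)] at h2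
    filter_upwards [h2] with ω h hω using h hω
  -- multiplicative structure
  have hαM : ∀ n, ∀ᵐ ω ∂P, M (n + 1) ω = α (n + 1) ω * M n ω := by
    intro n
    filter_upwards [hM0 n, hMlt n] with ω h0 hlt
    have hαω : α (n + 1) ω = if M n ω = 0 then 0 else M (n + 1) ω / M n ω := hα n ω
    rw [hαω]
    by_cases h : M n ω = 0
    · rw [if_pos h, h0 h, zero_mul]
    · rw [if_neg h, ENNReal.div_mul_cancel h hlt.ne]
  have hαlt : ∀ n, ∀ᵐ ω ∂P, α (n + 1) ω < ⊤ := by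
    intro n
    filter_upwards [hMlt (n + 1)] with ω hlt
    have hαω : α (n + 1) ω = if M n ω = 0 then 0 else M (n + 1) ω / M n ω := hα n ω
    rw [hαω]
    by_cases h : M n ω = 0
    · rw [if_pos h]; simp
    · rw [if_neg h]; exact ENNReal.div_lt_top hlt.ne h
  have hαmeas : ∀ n, Measurable (α (n + 1)) := by
    intro n
    have h : α (n + 1) = fun ω =>
        if M n ω = 0 then 0 else M (n + 1) ω / M n ω := funext (hα n)
    rw [h]
    exact Measurable.ite (hMmeas0 n (measurableSet_singleton 0)) measurable_const
      ((hMmeas0 (n + 1)).div (hMmeas0 n))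
  -- ∫ α ≤ 1
  have hαint : ∀ n, ∫⁻ ω, α (n + 1) ω ∂P ≤ 1 := by
    intro n
    set h : Ω → ENNReal := fun ω => if M n ω = 0 then 0 else (M n ω)⁻¹ with hhdef
    have hhmeas : ∀ m, n ≤ m → Measurable[ℱ m] h := fun m hm =>
      Measurable.ite ((hMmeas n).mono (ℱ.mono hm) le_rfl (measurableSet_singleton 0))
        measurable_const (((hMmeas n).mono (ℱ.mono hm) le_rfl).inv)
    have heq : α (n + 1) = fun ω => M (n + 1) ω * h ω := by
      funext ω
      have hαω : α (n + 1) ω = if M n ω = 0 then 0 else M (n + 1) ω / M n ω := hα n ω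
      rw [hαω, hhdef]
      by_cases hc : M n ω = 0
      · simp [hc]
      · simp only [if_neg hc, ENNReal.div_eq_inv_mul, mul_comm]
    have h1 : ∫⁻ ω, α (n + 1) ω ∂P = ∫⁻ ω, M (n + 1) ω * h ω ∂(P.trim (ℱ.le (n + 1))) := by
      rw [heq]; exact (lintegral_trim (ℱ.le (n + 1))
        (((hMmeas (n + 1))).mul ((hhmeas n le_rfl).mono (ℱ.mono (Nat.le_succ n)) le_rfl))).symm
    have h2 : ∫⁻ ω, M (n + 1) ω * h ω ∂(P.trim (ℱ.le (n + 1)))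
        = ∫⁻ ω, h ω ∂(Q.trim (ℱ.le (n + 1))) :=
      lintegral_rnDeriv_mul (habs (n + 1))
        ((hhmeas n le_rfl).mono (ℱ.mono (Nat.le_succ n)) le_rfl).aemeasurable
    have h3 : ∫⁻ ω, h ω ∂(Q.trim (ℱ.le (n + 1))) = ∫⁻ ω, h ω ∂(Q.trim (ℱ.le n)) := by
      rw [lintegral_trim (ℱ.le (n + 1)) ((hhmeas n le_rfl).mono (ℱ.mono (Nat.le_succ n)) le_rfl),
        lintegral_trim (ℱ.le n) (hhmeas n le_rfl)]
    have h4 : ∫⁻ ω, h ω ∂(Q.trim (ℱ.le n)) = ∫⁻ ω, M n ω * h ω ∂(P.trim (ℱ.le n)) :=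
      (lintegral_rnDeriv_mul (habs n) (hhmeas n le_rfl).aemeasurable).symm
    have h5 : ∫⁻ ω, M n ω * h ω ∂(P.trim (ℱ.le n)) = ∫⁻ ω, M n ω * h ω ∂P :=
      lintegral_trim (ℱ.le n) ((hMmeas n).mul (hhmeas n le_rfl))
    have h6 : ∫⁻ ω, M n ω * h ω ∂P ≤ 1 := by
      calc ∫⁻ ω, M n ω * h ω ∂P ≤ ∫⁻ _, 1 ∂P := by
            refine lintegral_mono fun ω => ?_
            rw [hhdef]
            by_cases hc : M n ω = 0
            · simp [hc]
            · simp only [if_neg hc]; exact ENNReal.mul_inv_le_one _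
        _ = 1 := by simp
    rw [h1, h2, h3, h4, h5]; exact h6
  -- X n = √(M n), g n = √(α (n+1)), β n = E[g n | ℱ n]
  set X : ℕ → Ω → ℝ := fun n ω => Real.sqrt ((M n ω).toReal) with hXdef
  set g : ℕ → Ω → ℝ := fun n ω => Real.sqrt ((α (n + 1) ω).toReal) with hgdef
  set β : ℕ → Ω → ℝ := fun n => P[g n | ℱ n] with hβdef
  have hsqrt_le : ∀ x : ℝ, 0 ≤ x → Real.sqrt x ≤ 1 + x := by
    intro x hx
    nlinarith [Real.sq_sqrt hx, sq_nonneg (Real.sqrt x - 1), Real.sqrt_nonneg x]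
  have hXmeas : ∀ n, StronglyMeasurable[ℱ n] (X n) := fun n =>
    Real.continuous_sqrt.comp_stronglyMeasurable (hMmeas n).ennreal_toReal.stronglyMeasurable
  have hXnonneg : ∀ n ω, 0 ≤ X n ω := fun n ω => Real.sqrt_nonneg _
  have hXint : ∀ n, Integrable (X n) P := by
    intro n
    refine Integrable.mono' ((integrable_const 1).add (hMint n))
      ((hXmeas n).mono (ℱ.le n)).aestronglyMeasurable (ae_of_all _ fun ω => ?_)
    rw [Real.norm_of_nonneg (hXnonneg n ω)]
    exact hsqrt_le _ ENNReal.toReal_nonneg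
  have hgint : ∀ n, Integrable (g n) P := by
    intro n
    have hint : Integrable (fun ω => (α (n + 1) ω).toReal) P :=
      integrable_toReal_of_lintegral_ne_top (hαmeas n).aemeasurable
        (lt_of_le_of_lt (hαint n) ENNReal.one_lt_top).ne
    refine Integrable.mono' ((integrable_const 1).add hint)
      (Real.continuous_sqrt.measurable.comp (hαmeas n).ennreal_toReal).aestronglyMeasurable
      (ae_of_all _ fun ω => ?_)
    rw [Real.norm_of_nonneg (Real.sqrt_nonneg _)]
    exact hsqrt_le _ ENNReal.toReal_nonneg
  -- X (n+1) = X n * g n a.e.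
  have hXprod : ∀ n, X (n + 1) =ᵐ[P] X n * g n := by
    intro n
    filter_upwards [hαM n] with ω hm
    show Real.sqrt ((M (n + 1) ω).toReal)
      = Real.sqrt ((M n ω).toReal) * Real.sqrt ((α (n + 1) ω).toReal)
    rw [hm, ENNReal.toReal_mul, Real.sqrt_mul ENNReal.toReal_nonneg, mul_comm (Real.sqrt _)]
  -- conditional expectation pull-out
  have hkey : ∀ n, P[X (n + 1) | ℱ n] =ᵐ[P] X n * β n := by
    intro n
    refine (condExp_congr_ae (hXprod n)).trans ?_
    exact condExp_mul_of_stronglyMeasurable_left (hXmeas n)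
      ((hXint (n + 1)).congr (hXprod n)) (hgint n)
  have hβ0 : ∀ n, 0 ≤ᵐ[P] β n := fun n =>
    condExp_nonneg (ae_of_all _ fun ω => Real.sqrt_nonneg _)
  have hβ0all : ∀ᵐ ω ∂P, ∀ n, 0 ≤ β n ω := ae_all_iff.mpr hβ0
  -- the supermartingale Y n = exp (S n) * X n
  set S : ℕ → Ω → ℝ := fun n ω => ∑ k ∈ Finset.range n, (1 - β k ω) with hSdef
  set Y : ℕ → Ω → ℝ := fun n ω => Real.exp (S n ω) * X n ω with hYdef
  have hSmeas : ∀ n m, n ≤ m + 1 → StronglyMeasurable[ℱ m] (S n) := by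
    intro n m hnm
    refine Finset.stronglyMeasurable_fun_sum _ fun k hk => ?_
    have hk' : k ≤ m := by
      have := Finset.mem_range.mp hk; omega
    exact stronglyMeasurable_const.sub (stronglyMeasurable_condExp.mono (ℱ.mono hk'))
  have hSmeas' : ∀ n, StronglyMeasurable[ℱ n] (S n) := fun n => hSmeas n n (Nat.le_succ n)
  have hSle : ∀ n, ∀ᵐ ω ∂P, S n ω ≤ n := by
    intro n
    filter_upwards [hβ0all] with ω hβω
    calc S n ω ≤ ∑ _k ∈ Finset.range n, (1 : ℝ) :=
          Finset.sum_le_sum fun k _ => by linarith [hβω k]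
      _ = n := by simp
  have hYnonneg : ∀ n ω, 0 ≤ Y n ω := fun n ω =>
    mul_nonneg (Real.exp_nonneg _) (hXnonneg n ω)
  have hYmeas : ∀ n, StronglyMeasurable[ℱ n] (Y n) := fun n =>
    (Real.continuous_exp.comp_stronglyMeasurable (hSmeas' n)).mul (hXmeas n)
  have hYint : ∀ n, Integrable (Y n) P := by
    intro n
    refine Integrable.bdd_mul (c := Real.exp n) (hXint n)
      ((Real.continuous_exp.comp_stronglyMeasurable
        (hSmeas' n)).mono (ℱ.le n)).aestronglyMeasurable ?_
    filter_upwards [hSle n] with ω hω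
    rw [Real.norm_of_nonneg (Real.exp_nonneg _)]
    exact Real.exp_le_exp.mpr hω
  -- one-step supermartingale inequality
  have hstep : ∀ n, P[Y (n + 1) | ℱ n] ≤ᵐ[P] Y n := by
    intro n
    have hexp_meas : StronglyMeasurable[ℱ n] fun ω => Real.exp (S (n + 1) ω) :=
      Real.continuous_exp.comp_stronglyMeasurable (hSmeas (n + 1) n le_rfl)
    have hprod_int : Integrable ((fun ω => Real.exp (S (n + 1) ω)) * X (n + 1)) P := by
      refine Integrable.bdd_mul (c := Real.exp (n + 1 : ℕ)) (hXint (n + 1))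
        (hexp_meas.mono (ℱ.le n)).aestronglyMeasurable ?_
      filter_upwards [hSle (n + 1)] with ω hω
      rw [Real.norm_of_nonneg (Real.exp_nonneg _)]
      exact Real.exp_le_exp.mpr hω
    have h0 : Y (n + 1) = (fun ω => Real.exp (S (n + 1) ω)) * X (n + 1) := rfl
    have h1 : P[Y (n + 1) | ℱ n]
        =ᵐ[P] (fun ω => Real.exp (S (n + 1) ω)) * P[X (n + 1) | ℱ n] := by
      rw [h0]
      exact condExp_mul_of_stronglyMeasurable_left hexp_meas hprod_int (hXint (n + 1))
    refine h1.le.trans ?_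
    filter_upwards [hkey n, hβ0 n] with ω hω hβω
    show Real.exp (S (n + 1) ω) * (P[X (n + 1) | ℱ n]) ω ≤ Real.exp (S n ω) * X n ω
    rw [hω]
    show Real.exp (S (n + 1) ω) * (X n ω * β n ω) ≤ Real.exp (S n ω) * X n ω
    have hSsucc : S (n + 1) ω = S n ω + (1 - β n ω) := Finset.sum_range_succ _ n
    rw [hSsucc, Real.exp_add]
    have hβe : β n ω * Real.exp (1 - β n ω) ≤ 1 := by
      have h := Real.add_one_le_exp (β n ω - 1)
      have h2 : β n ω ≤ Real.exp (β n ω - 1) := by linarith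
      calc β n ω * Real.exp (1 - β n ω)
          ≤ Real.exp (β n ω - 1) * Real.exp (1 - β n ω) :=
            mul_le_mul_of_nonneg_right h2 (Real.exp_nonneg _)
        _ = 1 := by rw [← Real.exp_add]; norm_num
    calc Real.exp (S n ω) * Real.exp (1 - β n ω) * (X n ω * β n ω)
        = Real.exp (S n ω) * X n ω * (β n ω * Real.exp (1 - β n ω)) := by ring
      _ ≤ Real.exp (S n ω) * X n ω * 1 :=
          mul_le_mul_of_nonneg_left hβe (mul_nonneg (Real.exp_nonneg _) (hXnonneg n ω))
      _ = Real.exp (S n ω) * X n ω := mul_one _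
  -- Y is a supermartingale, hence -Y is an L¹-bounded submartingale
  have hsuper : Supermartingale Y ℱ P := supermartingale_nat (fun n => hYmeas n) hYint hstep
  have hsub : Submartingale (-Y) ℱ P := hsuper.neg
  have hEY : ∀ n, ∫ ω, Y n ω ∂P ≤ ∫ ω, Y 0 ω ∂P := by
    intro n
    have := hsuper.setIntegral_le (Nat.zero_le n) (MeasurableSet.univ : MeasurableSet[ℱ 0] _)
    simpa [setIntegral_univ] using this
  have hbdd : ∀ n, eLpNorm ((-Y) n) 1 P ≤ ENNReal.ofReal (∫ ω, Y 0 ω ∂P) := by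
    intro n
    have hneg : (-Y) n = -(Y n) := rfl
    rw [hneg, eLpNorm_neg, eLpNorm_one_eq_lintegral_enorm]
    have h1 : ∫⁻ ω, ‖Y n ω‖ₑ ∂P = ENNReal.ofReal (∫ ω, Y n ω ∂P) := by
      rw [ofReal_integral_eq_lintegral_ofReal (hYint n) (ae_of_all _ fun ω => hYnonneg n ω)]
      refine lintegral_congr fun ω => ?_
      rw [← ofReal_norm_eq_enorm, Real.norm_of_nonneg (hYnonneg n ω)]
    rw [h1]
    exact ENNReal.ofReal_le_ofReal (hEY n)
  have hconv : ∀ᵐ ω ∂P, ∃ c, Tendsto (fun n => (-Y) n ω) atTop (𝓝 c) :=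
    hsub.exists_ae_tendsto_of_bdd (R := (∫ ω, Y 0 ω ∂P).toNNReal) fun n => hbdd n
  -- conclude X n → 0 a.s.
  have hX0 : ∀ᵐ ω ∂P, Tendsto (fun n => X n ω) atTop (𝓝 0) := by
    filter_upwards [hconv, hdiv] with ω hc hS
    obtain ⟨c, hc⟩ := hc
    have hY : Tendsto (fun n => Y n ω) atTop (𝓝 (-c)) := by
      have h := hc.neg
      simpa using h
    have hSω : Tendsto (fun n => S n ω) atTop atTop := hS
    have hexp : Tendsto (fun n => Real.exp (-S n ω)) atTop (𝓝 0) :=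
      Real.tendsto_exp_atBot.comp (tendsto_neg_atBot_iff.mpr hSω)
    have h := hY.mul hexp
    rw [mul_zero] at h
    refine h.congr fun n => ?_
    show Real.exp (S n ω) * X n ω * Real.exp (-S n ω) = X n ω
    rw [mul_comm (Real.exp (S n ω)) (X n ω), mul_assoc, ← Real.exp_add]
    simp
  have hMto0 : ∀ᵐ ω ∂P, Tendsto (fun n => (M n ω).toReal) atTop (𝓝 0) := by
    filter_upwards [hX0] with ω hX
    have h := hX.mul hX
    rw [mul_zero] at h
    refine h.congr fun n => ?_
    exact Real.mul_self_sqrt ENNReal.toReal_nonneg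
  -- Lévy upward theorem and comparison
  set F : Ω → ℝ := fun ω => (Q.rnDeriv P ω).toReal with hFdef
  have hFint : Integrable F P := Measure.integrable_toReal_rnDeriv
  have hFsm : StronglyMeasurable[⨆ n, ℱ n] F := by
    rw [hgen]
    exact (Measure.measurable_rnDeriv Q P).ennreal_toReal.stronglyMeasurable
  have hcle : ∀ n, (P[F | ℱ n]) ≤ᵐ[P] fun ω => (M n ω).toReal := by
    intro n
    set D : Ω → ℝ := fun ω => (M n ω).toReal - (P[F | ℱ n]) ω with hDdef
    have hDsm : StronglyMeasurable[ℱ n] D :=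
      ((hMmeas n).ennreal_toReal.stronglyMeasurable).sub stronglyMeasurable_condExp
    have hDint : Integrable D P := (hMint n).sub integrable_condExp
    have h0 : 0 ≤ᵐ[P.trim (ℱ.le n)] D := by
      refine ae_nonneg_of_forall_setIntegral_nonneg (hDint.trim (ℱ.le n) hDsm) ?_
      intro s hs _
      rw [← setIntegral_trim (ℱ.le n) hDsm hs]
      have hint1 : IntegrableOn (fun ω => (M n ω).toReal) s P := (hMint n).integrableOn
      have hint2 : IntegrableOn (P[F | ℱ n]) s P := integrable_condExp.integrableOn
      have hDint' : ∫ ω in s, D ω ∂P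
          = ∫ ω in s, (M n ω).toReal ∂P - ∫ ω in s, (P[F | ℱ n]) ω ∂P := by
        rw [hDdef]
        exact integral_sub hint1 hint2
      rw [hDint']
      have e1 : ∫ ω in s, (M n ω).toReal ∂P = (Q s).toReal := by
        rw [integral_toReal ((hMmeas0 n).aemeasurable.restrict) (ae_restrict_of_ae (hMlt n)),
          hQeq n hs]
      have e2 : ∫ ω in s, (P[F | ℱ n]) ω ∂P ≤ (Q s).toReal := by
        rw [setIntegral_condExp (ℱ.le n) hFint hs]
        have e3 : ∫ ω in s, F ω ∂P = (∫⁻ ω in s, Q.rnDeriv P ω ∂P).toReal := by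
          rw [hFdef]
          exact integral_toReal ((Measure.measurable_rnDeriv Q P).aemeasurable.restrict)
            (ae_restrict_of_ae (Measure.rnDeriv_lt_top Q P))
        rw [e3]
        exact ENNReal.toReal_mono (measure_ne_top Q s) (Measure.setLIntegral_rnDeriv_le s)
      rw [e1]
      linarith
    have h1 := ae_of_ae_trim (ℱ.le n) h0
    filter_upwards [h1] with ω hω
    have : (0 : ℝ) ≤ (M n ω).toReal - (P[F | ℱ n]) ω := hω
    linarith
  have hlevy := hFint.tendsto_ae_condExp hFsm
  have hF0 : F =ᵐ[P] 0 := by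
    have hcle' : ∀ᵐ ω ∂P, ∀ n, (P[F | ℱ n]) ω ≤ (M n ω).toReal := ae_all_iff.mpr hcle
    filter_upwards [hlevy, hMto0, hcle'] with ω h1 h2 h3
    have hle0 : F ω ≤ 0 := le_of_tendsto_of_tendsto' h1 h2 h3
    have hge0 : 0 ≤ F ω := ENNReal.toReal_nonneg
    simpa using le_antisymm hle0 hge0
  have hrn0 : Q.rnDeriv P =ᵐ[P] 0 := by
    filter_upwards [hF0, Measure.rnDeriv_lt_top Q P] with ω h1 h2
    have h1' : (Q.rnDeriv P ω).toReal = 0 := h1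
    simp only [Pi.zero_apply]
    exact ((ENNReal.toReal_eq_zero_iff _).mp h1').resolve_right h2.ne
  exact (Measure.rnDeriv_eq_zero Q P).mp hrn0
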